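/- Let W be an m-dimensional Euclidean space and n a positive integer. There is a constant c(m,n) such that for all nonempty compact convex sets C, C′ ⊆ B(0,n) ⊆ W with Hausdorff distance δ = dist_𝓗(C,C′) ≤ 1, one has |𝓗ᵐ(C) − 𝓗ᵐ(C′)| ≤ δ · c(m,n). -/

import Mathlib

set_option linter.unusedSectionVars false
set_option maxHeartbeats 1000000

open MeasureTheory Metric Set Module
open scoped ENNReal Pointwise RealInnerProductSpace

section Stmt15Aux

variable {W : Type*} [NormedAddCommGroup W] [InnerProductSpace ℝ W]
    [FiniteDimensional ℝ W] [MeasurableSpace W] [BorelSpace W]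

private lemma one_add_pow_le (m : ℕ) {t : ℝ} (h0 : 0 ≤ t) (h1 : t ≤ 1) :
    (1 + t) ^ m ≤ 1 + ((2:ℝ) ^ m - 1) * t := by
  induction m with
  | zero => simp
  | succ k ih =>
    have h2 : (1:ℝ) ≤ 2 ^ k := one_le_pow₀ (by norm_num)
    have ht2 : t * t ≤ t := by nlinarith
    have h3 : (0:ℝ) ≤ 1 + t := by linarith
    have h4 := mul_le_mul_of_nonneg_right ih h3
    have h5 : ((2:ℝ)^k - 1) * (t * t) ≤ ((2:ℝ)^k - 1) * t :=
      mul_le_mul_of_nonneg_left ht2 (by linarith)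
    have : (1 + t) ^ (k+1) = (1+t)^k * (1+t) := by ring
    rw [this, pow_succ 2 k]
    nlinarith [h4, h5]


private lemma meas_vadd_image (μ : Measure W) [μ.IsAddLeftInvariant] (a : W) (s : Set W) :
    μ ((fun x => a + x) '' s) = μ s := by
  rw [Set.image_add_left, measure_preimage_add]


private lemma erosion {C : Set W} (hcl : IsClosed C) (hconv : Convex ℝ C) (hne : C.Nonempty)
    {δ s : ℝ} (hδ : 0 ≤ δ) {x : W}
    (h : closedBall x s ⊆ C + closedBall (0:W) δ) : closedBall x (s - δ) ⊆ C := by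
  intro z hz
  by_contra hzC
  obtain ⟨f, u, hfC, hfz⟩ := geometric_hahn_banach_closed_point hconv hcl hzC
  obtain ⟨a₀, ha₀⟩ := hne
  have hf0 : f ≠ 0 := by
    rintro rfl
    simp only [ContinuousLinearMap.zero_apply] at hfC hfz
    linarith [hfC a₀ ha₀]
  set g := (InnerProductSpace.toDual ℝ W).symm f with hg
  have hgf : ∀ w : W, f w = ⟪g, w⟫ := fun w => (InnerProductSpace.toDual_symm_apply).symm
  have hgnorm : ‖g‖ = ‖f‖ := LinearIsometryEquiv.norm_map _ f
  have hg0 : g ≠ 0 := by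
    intro h0
    apply hf0
    have : ‖f‖ = 0 := by rw [← hgnorm, h0, norm_zero]
    exact norm_eq_zero.mp this
  have hgn : (0:ℝ) < ‖g‖ := norm_pos_iff.2 hg0
  set ν : W := ‖g‖⁻¹ • g with hν
  have hν1 : ‖ν‖ = 1 := by
    rw [hν, norm_smul, norm_inv, norm_norm]
    field_simp
  have hfν : f ν = ‖f‖ := by
    rw [hgf, hν, real_inner_smul_right, real_inner_self_eq_norm_mul_norm, ← hgnorm]
    field_simp
  have hw : z + δ • ν ∈ closedBall x s := by
    rw [mem_closedBall] at hz ⊢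
    have hd1 : dist (z + δ • ν) z = δ := by
      rw [dist_eq_norm, add_sub_cancel_left, norm_smul, hν1, Real.norm_eq_abs,
        abs_of_nonneg hδ, mul_one]
    calc dist (z + δ • ν) x ≤ dist (z + δ • ν) z + dist z x := dist_triangle _ _ _
      _ ≤ δ + (s - δ) := by rw [hd1]; linarith
      _ = s := by ring
  obtain ⟨a, ha, e, he, hae⟩ := Set.mem_add.1 (h hw)
  have h1 : f a < u := hfC a ha
  have h2 : f e ≤ ‖f‖ * δ := by
    calc f e ≤ |f e| := le_abs_self _
      _ = ‖f e‖ := (Real.norm_eq_abs _).symm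
      _ ≤ ‖f‖ * ‖e‖ := f.le_opNorm e
      _ ≤ ‖f‖ * δ := by
          exact mul_le_mul_of_nonneg_left (mem_closedBall_zero_iff.1 he) (norm_nonneg _)
  have h3 : f (z + δ • ν) = f z + δ * ‖f‖ := by
    rw [map_add, _root_.map_smul, smul_eq_mul, hfν]
  have h4 : f (z + δ • ν) = f a + f e := by rw [← hae, map_add]
  linarith


private lemma homothety_subset {C : Set W} (hconv : Convex ℝ C) {x₀ : W} {r δ : ℝ}
    (hr : 0 < r) (hδ : 0 ≤ δ) (hball : closedBall x₀ r ⊆ C) :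
    C + closedBall (0:W) δ ⊆ (fun y => x₀ + (1 + δ / r) • (y - x₀)) '' C := by
  rcases eq_or_lt_of_le hδ with hδ0 | hδpos
  · intro z hz
    obtain ⟨a, ha, e, he, hae⟩ := Set.mem_add.1 hz
    rw [← hδ0, closedBall_zero, mem_singleton_iff] at he
    refine ⟨a, ha, ?_⟩
    simp only [← hδ0, zero_div, add_zero, one_smul, ← hae, he]
    abel
  · intro z hz
    obtain ⟨a, ha, e, he, hae⟩ := Set.mem_add.1 hz
    have hrδ : (0:ℝ) < 1 + δ / r := by positivity
    have hrδ' : (1:ℝ) ≤ 1 + δ / r := by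
      have : 0 ≤ δ / r := div_nonneg hδ hr.le
      linarith
    have hmem : x₀ + (r / δ) • e ∈ C := by
      apply hball
      rw [mem_closedBall_iff_norm, add_sub_cancel_left, norm_smul, Real.norm_eq_abs,
        abs_of_nonneg (div_nonneg hr.le hδ)]
      have h1 : ‖e‖ ≤ δ := mem_closedBall_zero_iff.1 he
      calc r / δ * ‖e‖ ≤ r / δ * δ := by
            exact mul_le_mul_of_nonneg_left h1 (div_nonneg hr.le hδ)
        _ = r := by field_simp
    refine ⟨(1 + δ/r)⁻¹ • a + (1 - (1 + δ/r)⁻¹) • (x₀ + (r/δ) • e), ?_, ?_⟩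
    · apply hconv ha hmem (by positivity) ?_ (by ring)
      have : (1 + δ/r)⁻¹ ≤ 1 := by
        rw [inv_le_one_iff₀]
        right; exact hrδ'
      linarith
    · rw [← hae]
      have hc0 : (1 + δ/r) ≠ 0 := ne_of_gt hrδ
      have hδ0' : δ ≠ 0 := ne_of_gt hδpos
      have hr0 : r ≠ 0 := ne_of_gt hr
      match_scalars <;> field_simp <;> ring


private lemma meas_homothety (x₀ : W) (s : ℝ) (C : Set W) :
    μH[(finrank ℝ W : ℝ)] ((fun y => x₀ + s • (y - x₀)) '' C)
      = ENNReal.ofReal (|s ^ (finrank ℝ W)|) * μH[(finrank ℝ W : ℝ)] C := by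
  have h : (fun y : W => x₀ + s • (y - x₀))
      = (fun w => x₀ + w) ∘ (fun w : W => s • w) ∘ (fun y => y + (-x₀)) := by
    funext y; simp [sub_eq_add_neg]
  rw [h, Set.image_comp, Set.image_comp, meas_vadd_image]
  have h2 : (fun w : W => s • w) '' ((fun y => y + (-x₀)) '' C)
      = s • ((fun y => y + (-x₀)) '' C) := by
    rw [Set.image_smul]
  rw [h2, Measure.addHaar_smul, Set.image_add_right, neg_neg, measure_preimage_add_right]


/-- Key lemma: if a compact convex subset of `closedBall 0 R` contains no closed ball
of radius `r`, then its Hausdorff measure is at most `K * r`. -/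
private lemma exists_K (R : ℝ) (hR : 0 < R) :
    ∃ K : ℝ, 0 ≤ K ∧ ∀ (C : Set W) (r : ℝ), 0 < r → IsCompact C → Convex ℝ C →
      C ⊆ closedBall 0 R → (∀ x : W, ¬ closedBall x r ⊆ C) →
      (μH[(finrank ℝ W : ℝ)] C).toReal ≤ K * r := by
  by_cases hsub : Subsingleton W
  · refine ⟨0, le_rfl, fun C r hr hC hconv hsubB hno => ?_⟩
    rcases C.eq_empty_or_nonempty with rfl | ⟨x₀, hx₀⟩
    · simp
    · exact absurd (fun y _ => (Subsingleton.elim y x₀) ▸ hx₀) (hno x₀)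
  have : Nontrivial W := not_subsingleton_iff_nontrivial.mp hsub
  set m := finrank ℝ W with hmdef
  have hm : 0 < m := finrank_pos
  have hm1 : (1:ℝ) ≤ (m:ℝ) := by exact_mod_cast hm
  have : Nonempty (Fin m) := ⟨⟨0, hm⟩⟩
  set b : Basis (Fin m) ℝ W := finBasis ℝ W with hbdef
  -- coordinate functionals are bounded
  obtain ⟨κ, hκpos, hκ⟩ : ∃ κ : ℝ, 0 < κ ∧ ∀ (w : W) (i : Fin m), |b.repr w i| ≤ κ * ‖w‖ := by
    have hex : ∀ i : Fin m, ∃ ci : ℝ, 0 ≤ ci ∧ ∀ w : W, |b.repr w i| ≤ ci * ‖w‖ := by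
      intro i
      refine ⟨‖LinearMap.toContinuousLinearMap (b.coord i)‖, norm_nonneg _, fun w => ?_⟩
      have h1 := (LinearMap.toContinuousLinearMap (b.coord i)).le_opNorm w
      simpa [Real.norm_eq_abs, Basis.coord_apply] using h1
    choose c hc0 hc using hex
    have hsumc : 0 ≤ ∑ i, c i := Finset.sum_nonneg fun i _ => hc0 i
    refine ⟨(∑ i, c i) + 1, by linarith, fun w i => ?_⟩
    refine (hc i w).trans (mul_le_mul_of_nonneg_right ?_ (norm_nonneg w))
    have h2 : c i ≤ ∑ j, c j := Finset.single_le_sum (fun j _ => hc0 j) (Finset.mem_univ i)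
    linarith
  -- determinant bound
  have hdetb : ∀ w : Fin m → W, |b.det w| ≤ (m.factorial : ℝ) * ∏ i, (κ * ‖w i‖) := by
    intro w
    rw [Basis.det_apply, Matrix.det_apply']
    refine (Finset.abs_sum_le_sum_abs _ _).trans ?_
    have hbound : ∀ σ : Equiv.Perm (Fin m),
        |(Equiv.Perm.sign σ : ℤ) * ∏ i, b.toMatrix w (σ i) i| ≤ ∏ i, (κ * ‖w i‖) := by
      intro σ
      rw [abs_mul]
      have hsgn : |((Equiv.Perm.sign σ : ℤ) : ℝ)| = 1 := by
        rcases Int.units_eq_one_or (Equiv.Perm.sign σ) with h | h <;> simp [h]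
      rw [show |((Equiv.Perm.sign σ : ℤ) : ℝ)| = 1 from hsgn, one_mul, Finset.abs_prod]
      refine Finset.prod_le_prod (fun i _ => abs_nonneg _) (fun i _ => ?_)
      rw [Basis.toMatrix_apply]
      exact hκ (w i) (σ i)
    refine (Finset.sum_le_sum fun σ _ => hbound σ).trans ?_
    rw [Finset.sum_const, Finset.card_univ, Fintype.card_perm, Fintype.card_fin, nsmul_eq_mul]
  -- the box and its measure
  set box : Set W := (fun t : Fin m → ℝ => ∑ j, t j • b j) ''
    (Set.pi Set.univ fun _ : Fin m => Set.Icc (-1:ℝ) 1) with hboxdef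
  have hboxc : IsCompact box := by
    apply (isCompact_univ_pi fun _ => isCompact_Icc).image
    exact continuous_finset_sum _ fun j _ => (continuous_apply j).smul continuous_const
  set β : ℝ≥0∞ := μH[(finrank ℝ W : ℝ)] box with hβdef
  have hβ : β ≠ ⊤ := hboxc.measure_lt_top.ne
  set denom : ℝ := (m.factorial : ℝ) * κ ^ m * (2*R)^(m-1) * ((m:ℝ)*((m:ℝ)+1)) with hdenomdef
  have hdenpos : 0 < denom := by
    have h1 : (0:ℝ) < (m.factorial : ℝ) := by exact_mod_cast m.factorial_pos
    have h2 : (0:ℝ) < (m:ℝ) := by exact_mod_cast hm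
    positivity
  refine ⟨denom * β.toReal + 1, by positivity, fun C r hr hC hconv hsubB hno => ?_⟩
  rcases C.eq_empty_or_nonempty with rfl | ⟨x₀, hx₀⟩
  · simp only [measure_empty, ENNReal.toReal_zero]
    positivity
  -- maximize the determinant over tuples in C
  set S : Set (Fin (m+1) → W) := Set.pi Set.univ (fun _ => C) with hSdef
  have hScomp : IsCompact S := isCompact_univ_pi fun _ => hC
  have hSne : S.Nonempty := ⟨fun _ => x₀, fun i _ => hx₀⟩
  set g : (Fin (m+1) → W) → ℝ := fun v => |b.det fun j => v j.succ - v 0| with hgdef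
  have hgcont : Continuous g := by
    have h1 : Continuous fun w : Fin m → W => b.det w := by
      have heq : (fun w : Fin m → W => b.det w)
          = fun w => Matrix.det (Matrix.of fun i j => (b.coord i) (w j)) := by
        funext w; rw [Basis.det_apply]; rfl
      rw [heq]
      apply Continuous.matrix_det
      apply continuous_matrix
      intro i j
      exact ((b.coord i).continuous_of_finiteDimensional).comp (continuous_apply j)
    have h2 : Continuous fun v : Fin (m+1) → W => (fun j : Fin m => v j.succ - v 0) :=
      continuous_pi fun j => (continuous_apply j.succ).sub (continuous_apply 0)
    exact (h1.comp h2).abs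
  obtain ⟨v, hvS, hvmax⟩ := hScomp.exists_isMaxOn hSne hgcont.continuousOn
  have hvmax' : ∀ y ∈ S, g y ≤ g v := fun y hy => hvmax hy
  have hvC : ∀ i, v i ∈ C := fun i => hvS i (Set.mem_univ i)
  set u : Fin m → W := fun j => v j.succ - v 0 with hudef
  have hgv : g v = |b.det u| := rfl
  by_cases hD : b.det u = 0
  -- degenerate case: measure zero
  · have hint : interior C = ∅ := by
      by_contra hne'
      obtain ⟨x, hx⟩ := nonempty_iff_ne_empty.2 hne'
      obtain ⟨ε, hε, hballx⟩ := Metric.isOpen_iff.1 isOpen_interior x hx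
      set t : ℝ := ε / (2 * ((∑ i, ‖b i‖) + 1)) with htdef
      have hsum0 : (0:ℝ) < (∑ i, ‖b i‖) + 1 := by positivity
      have ht : 0 < t := by positivity
      set v' : Fin (m+1) → W := Fin.cons x (fun i => x + t • b i) with hv'def
      have hv'S : v' ∈ S := by
        intro i _
        refine Fin.cases ?_ ?_ i
        · exact interior_subset (hballx (mem_ball_self hε))
        · intro j
          apply interior_subset
          apply hballx
          rw [mem_ball, dist_eq_norm]
          simp only [hv'def, Fin.cons_succ, Fin.cons_zero, add_sub_cancel_left]
          rw [norm_smul, Real.norm_eq_abs, abs_of_nonneg ht.le]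
          have h1 : ‖b j‖ ≤ ∑ i, ‖b i‖ :=
            Finset.single_le_sum (fun i _ => norm_nonneg _) (Finset.mem_univ j)
          have h2 : t * ((∑ i, ‖b i‖) + 1) = ε / 2 := by
            rw [htdef]; field_simp
          nlinarith
      have hgv' : g v' = t ^ m := by
        have h1 : (fun j : Fin m => v' j.succ - v' 0) = fun j => t • b j := by
          funext j
          simp only [hv'def, Fin.cons_succ, Fin.cons_zero, add_sub_cancel_left]
        have h3 := MultilinearMap.map_smul_univ (b.det.toMultilinearMap) (fun _ : Fin m => t) ⇑b
        simp only [AlternatingMap.coe_multilinearMap] at h3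
        rw [hgdef]
        simp only [h1]
        rw [h3, Basis.det_self, smul_eq_mul, mul_one, Finset.prod_const, Finset.card_univ,
          Fintype.card_fin, abs_of_nonneg (pow_nonneg ht.le m)]
      have hle := hvmax' v' hv'S
      rw [hgv', hgv, hD, abs_zero] at hle
      exact absurd hle (not_le.2 (pow_pos ht m))
    have hμ0 : μH[(finrank ℝ W : ℝ)] C = 0 := by
      have hfr : C ⊆ frontier C := by
        rw [frontier, hint, diff_empty]
        exact subset_closure
      exact le_antisymm ((measure_mono hfr).trans (hconv.addHaar_frontier _).le) zero_le
    rw [hμ0]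
    simp only [ENNReal.toReal_zero]
    positivity
  -- nondegenerate case
  · have hDpos : 0 < |b.det u| := abs_pos.2 hD
    have hu2R : ∀ j, ‖u j‖ ≤ 2*R := by
      intro j
      have h1 : ‖v j.succ‖ ≤ R := mem_closedBall_zero_iff.1 (hsubB (hvC j.succ))
      have h2 : ‖v 0‖ ≤ R := mem_closedBall_zero_iff.1 (hsubB (hvC 0))
      calc ‖u j‖ = ‖v j.succ - v 0‖ := rfl
        _ ≤ ‖v j.succ‖ + ‖v 0‖ := norm_sub_le _ _
        _ ≤ 2*R := by linarith
    have hindep : LinearIndependent ℝ u := by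
      by_contra hdep
      exact hD (b.det.map_linearDependent u hdep)
    set ub : Basis (Fin m) ℝ W :=
      basisOfLinearIndependentOfCardEqFinrank hindep (by simp [hmdef]) with hubdef
    have hub : ⇑ub = u := coe_basisOfLinearIndependentOfCardEqFinrank _ _
    -- determinant expansion along coordinates
    have hexp : ∀ (j : Fin m) (w : W),
        b.det (Function.update u j w) = ub.repr w j * b.det u := by
      intro j w
      conv_lhs => rw [← ub.sum_repr w]
      simp only [hub]
      rw [b.det.map_update_sum Finset.univ j (fun k => ub.repr w k • u k) u]
      rw [Finset.sum_eq_single j]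
      · rw [AlternatingMap.map_update_smul, Function.update_eq_self, smul_eq_mul]
      · intro k _ hkj
        rw [AlternatingMap.map_update_smul]
        have h0 : b.det (Function.update u j (u k)) = 0 := by
          apply AlternatingMap.map_eq_zero_of_eq _ _ (i := j) (j := k)
          · rw [Function.update_self, Function.update_of_ne hkj]
          · exact fun h => hkj (by rw [h])
        rw [h0, smul_zero]
      · intro h; exact absurd (Finset.mem_univ j) h
    -- coordinates of points of C are bounded by 1
    have hcoord : ∀ x ∈ C, ∀ j : Fin m, |ub.repr (x - v 0) j| ≤ 1 := by
      intro x hx j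
      have hv'S : Function.update v j.succ x ∈ S := by
        intro i _
        rcases eq_or_ne i j.succ with rfl | hij
        · rw [Function.update_self]; exact hx
        · rw [Function.update_of_ne hij]; exact hvC i
      have h0 : Function.update v j.succ x 0 = v 0 :=
        Function.update_of_ne (Fin.succ_ne_zero j).symm _ _
      have h1 : (fun i : Fin m => Function.update v j.succ x i.succ
          - Function.update v j.succ x 0) = Function.update u j (x - v 0) := by
        funext i
        rw [h0]
        rcases eq_or_ne i j with rfl | hij
        · rw [Function.update_self, Function.update_self]
        · rw [Function.update_of_ne hij,
            Function.update_of_ne (fun h => hij (Fin.succ_injective _ h))]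
      have h2 : g (Function.update v j.succ x) = |ub.repr (x - v 0) j| * |b.det u| := by
        rw [hgdef]
        simp only [h1]
        rw [hexp j (x - v 0), abs_mul]
      have h3 := hvmax' _ hv'S
      rw [h2, hgv] at h3
      nlinarith
    -- box containment and measure bound
    set T : W →ₗ[ℝ] W := b.constr ℕ u with hTdef
    have hTb : ∀ j, T (b j) = u j := fun j => b.constr_basis ℕ u j
    have hbox : C ⊆ (fun w => v 0 + w) '' (T '' box) := by
      intro x hx
      set t : Fin m → ℝ := fun j => ub.repr (x - v 0) j with htdef'
      have hTt : T (∑ j, t j • b j) = x - v 0 := by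
        rw [map_sum]
        have h1 : ∀ j, T (t j • b j) = t j • u j := by
          intro j; rw [LinearMap.map_smul, hTb]
        simp only [h1]
        have h2 : ∑ j, t j • u j = x - v 0 := by
          conv_rhs => rw [← ub.sum_repr (x - v 0)]
          simp only [hub, htdef']
        exact h2
      refine ⟨T (∑ j, t j • b j), ⟨∑ j, t j • b j, ⟨t, fun j _ => ?_, rfl⟩, rfl⟩, ?_⟩
      · have := hcoord x hx j
        rw [abs_le] at this
        exact Set.mem_Icc.2 this
      · rw [hTt]; exact add_sub_cancel _ _
    have hTdet : |LinearMap.det T| = |b.det u| := by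
      congr 1
      rw [Basis.det_apply, Basis.toMatrix_eq_toMatrix_constr, LinearMap.det_toMatrix]
    have hμC : μH[(finrank ℝ W : ℝ)] C ≤ ENNReal.ofReal |b.det u| * β := by
      refine (measure_mono hbox).trans ?_
      rw [meas_vadd_image, Measure.addHaar_image_linearMap, hTdet]
    -- inscribed ball
    set ρ : ℝ := |b.det u| / denom with hρdef
    have hρpos : 0 < ρ := div_pos hDpos hdenpos
    set c₀ : W := v 0 + ((m:ℝ)+1)⁻¹ • ∑ j, u j with hc₀def
    have hball : closedBall c₀ ρ ⊆ C := by
      intro y hy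
      have hyn : ‖y - c₀‖ ≤ ρ := mem_closedBall_iff_norm.1 hy
      set t : Fin m → ℝ := fun j => ub.repr (y - v 0) j with ht2def
      have hrepr_c₀ : ∀ j, ub.repr (c₀ - v 0) j = ((m:ℝ)+1)⁻¹ := by
        intro j
        have h1 : c₀ - v 0 = ∑ k, ((m:ℝ)+1)⁻¹ • ub k := by
          rw [hc₀def, add_sub_cancel_left, Finset.smul_sum]
          simp only [hub]
        rw [h1, ub.repr_sum_self]
      have hdiff : ∀ j, |t j - ((m:ℝ)+1)⁻¹| ≤ ((m:ℝ)*((m:ℝ)+1))⁻¹ := by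
        intro j
        have h1 : t j - ((m:ℝ)+1)⁻¹ = ub.repr (y - c₀) j := by
          simp only [ht2def]
          rw [← hrepr_c₀ j]
          have h1' : y - c₀ = (y - v 0) - (c₀ - v 0) := by abel
          rw [h1']
          simp only [map_sub, Finsupp.sub_apply]
        rw [h1]
        -- |ub.repr (y - c₀) j| * |b.det u| = |b.det (update u j (y - c₀))| ≤ F * ‖y - c₀‖
        have h2 : |ub.repr (y - c₀) j| * |b.det u|
            = |b.det (Function.update u j (y - c₀))| := by
          rw [hexp j (y - c₀), abs_mul]
        have hF : |b.det (Function.update u j (y - c₀))|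
            ≤ ((m.factorial : ℝ) * κ ^ m * (2*R)^(m-1)) * ‖y - c₀‖ := by
          refine (hdetb _).trans ?_
          have hprod : ∏ i, (κ * ‖Function.update u j (y - c₀) i‖)
              = κ^m * ∏ i, ‖Function.update u j (y - c₀) i‖ := by
            rw [Finset.prod_mul_distrib, Finset.prod_const, Finset.card_univ, Fintype.card_fin]
          rw [hprod]
          have hupd : (fun i => ‖Function.update u j (y - c₀) i‖)
              = Function.update (fun i => ‖u i‖) j ‖y - c₀‖ := by
            funext i
            rcases eq_or_ne i j with rfl | h
            · rw [Function.update_self, Function.update_self]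
            · rw [Function.update_of_ne h, Function.update_of_ne h]
          have hprod2 : ∏ i, ‖Function.update u j (y - c₀) i‖
              = ‖y - c₀‖ * ∏ i ∈ Finset.univ.erase j, ‖u i‖ := by
            calc ∏ i, ‖Function.update u j (y - c₀) i‖
                = ∏ i, Function.update (fun i => ‖u i‖) j ‖y - c₀‖ i := by rw [hupd]
              _ = ‖y - c₀‖ * ∏ i ∈ Finset.univ.erase j, ‖u i‖ := by
                  rw [Finset.prod_update_of_mem (Finset.mem_univ j)]
                  congr 1
                  apply Finset.prod_congr
                  · rw [Finset.sdiff_singleton_eq_erase]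
                  · intros; rfl
          have hprod3 : ∏ i ∈ Finset.univ.erase j, ‖u i‖ ≤ (2*R)^(m-1) := by
            calc ∏ i ∈ Finset.univ.erase j, ‖u i‖
                ≤ ∏ _i ∈ Finset.univ.erase j, (2*R) :=
                  Finset.prod_le_prod (fun i _ => norm_nonneg _) (fun i _ => hu2R i)
              _ = (2*R)^(m-1) := by
                  rw [Finset.prod_const, Finset.card_erase_of_mem (Finset.mem_univ j)]
                  simp
          rw [hprod2]
          have hmn : (0:ℝ) ≤ (m.factorial : ℝ) := Nat.cast_nonneg _
          have h4 : ‖y - c₀‖ * ∏ i ∈ Finset.univ.erase j, ‖u i‖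
              ≤ (2*R)^(m-1) * ‖y - c₀‖ := by
            rw [mul_comm]
            exact mul_le_mul_of_nonneg_right hprod3 (norm_nonneg _)
          calc (m.factorial : ℝ) * (κ^m * (‖y - c₀‖ * ∏ i ∈ Finset.univ.erase j, ‖u i‖))
              ≤ (m.factorial : ℝ) * (κ^m * ((2*R)^(m-1) * ‖y - c₀‖)) := by
                refine mul_le_mul_of_nonneg_left ?_ hmn
                exact mul_le_mul_of_nonneg_left h4 (by positivity)
            _ = ((m.factorial : ℝ) * κ ^ m * (2*R)^(m-1)) * ‖y - c₀‖ := by ring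
        -- conclude the coordinate bound
        have h5 : |ub.repr (y - c₀) j| * |b.det u|
            ≤ ((m.factorial : ℝ) * κ ^ m * (2*R)^(m-1)) * ρ := by
          rw [h2]
          refine hF.trans ?_
          exact mul_le_mul_of_nonneg_left hyn (by positivity)
        have h6 : ((m.factorial : ℝ) * κ ^ m * (2*R)^(m-1)) * ρ
            = ((m:ℝ)*((m:ℝ)+1))⁻¹ * |b.det u| := by
          rw [hρdef, hdenomdef]
          field_simp
        rw [h6] at h5
        have := le_of_mul_le_mul_right h5 hDpos
        exact this
      -- coordinates give a convex combination
      have hmm1 : (0:ℝ) < (m:ℝ) := by exact_mod_cast hm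
      have hinv_le : ((m:ℝ)*((m:ℝ)+1))⁻¹ ≤ ((m:ℝ)+1)⁻¹ := by
        apply inv_anti₀ (by positivity)
        nlinarith
      have ht0 : ∀ j, 0 ≤ t j := by
        intro j
        have := abs_le.1 (hdiff j)
        linarith [hinv_le]
      have htsum : ∑ j, t j ≤ 1 := by
        have h7 : ∀ j : Fin m, t j ≤ ((m:ℝ)+1)⁻¹ + ((m:ℝ)*((m:ℝ)+1))⁻¹ := by
          intro j
          have := abs_le.1 (hdiff j)
          linarith
        calc ∑ j, t j ≤ ∑ _j : Fin m, (((m:ℝ)+1)⁻¹ + ((m:ℝ)*((m:ℝ)+1))⁻¹) :=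
              Finset.sum_le_sum fun j _ => h7 j
          _ = (m:ℝ) * (((m:ℝ)+1)⁻¹ + ((m:ℝ)*((m:ℝ)+1))⁻¹) := by
              rw [Finset.sum_const, Finset.card_univ, Fintype.card_fin, nsmul_eq_mul]
          _ = 1 := by field_simp
      have hy_eq : y = ∑ k, (Fin.cons (1 - ∑ j, t j) t : Fin (m+1) → ℝ) k • v k := by
        have h8 : y = v 0 + ∑ j, t j • u j := by
          have h9 : ∑ j, t j • u j = y - v 0 := by
            conv_rhs => rw [← ub.sum_repr (y - v 0)]
            simp only [hub, ht2def]
          rw [h9]; abel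
        rw [Fin.sum_univ_succ]
        simp only [Fin.cons_zero, Fin.cons_succ]
        rw [h8]
        have h10 : ∀ j : Fin m, t j • u j = t j • v j.succ - t j • v 0 := by
          intro j; rw [hudef]; rw [smul_sub]
        simp only [h10]
        rw [Finset.sum_sub_distrib, sub_smul, one_smul, ← Finset.sum_smul]
        abel
      rw [hy_eq]
      apply hconv.sum_mem
      · intro k _
        refine Fin.cases ?_ ?_ k
        · simp only [Fin.cons_zero]; linarith [htsum]
        · intro j; simp only [Fin.cons_succ]; exact ht0 j
      · rw [Fin.sum_univ_succ]
        simp only [Fin.cons_zero, Fin.cons_succ]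
        ring
      · intro k _; exact hvC k
    -- no r-ball inside C forces ρ < r
    have hρr : ρ < r := by
      by_contra hle
      push_neg at hle
      exact hno c₀ ((closedBall_subset_closedBall hle).trans hball)
    have hDlt : |b.det u| < r * denom := by
      rw [hρdef, div_lt_iff₀ hdenpos] at hρr
      exact hρr
    have h1 : (μH[(finrank ℝ W : ℝ)] C).toReal ≤ |b.det u| * β.toReal := by
      have hfin : ENNReal.ofReal |b.det u| * β ≠ ⊤ :=
        ENNReal.mul_ne_top ENNReal.ofReal_ne_top hβ
      refine (ENNReal.toReal_mono hfin hμC).trans_eq ?_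
      rw [ENNReal.toReal_mul, ENNReal.toReal_ofReal (abs_nonneg _)]
    calc (μH[(finrank ℝ W : ℝ)] C).toReal ≤ |b.det u| * β.toReal := h1
      _ ≤ (r * denom) * β.toReal :=
          mul_le_mul_of_nonneg_right hDlt.le ENNReal.toReal_nonneg
      _ = (denom * β.toReal) * r := by ring
      _ ≤ (denom * β.toReal + 1) * r := by nlinarith [hr.le]


private lemma exists_c2 (n : ℕ) (hn : 0 < n) :
    ∃ c : ℝ, 0 ≤ c ∧ ∀ (C : Set W) (δ : ℝ), C.Nonempty → IsCompact C → Convex ℝ C →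
      C ⊆ closedBall 0 (n:ℝ) → 0 ≤ δ → δ ≤ 1 →
      (μH[(finrank ℝ W : ℝ)] (C + closedBall (0:W) δ)).toReal
        ≤ (μH[(finrank ℝ W : ℝ)] C).toReal + δ * c := by
  by_cases hsub : Subsingleton W
  · refine ⟨0, le_rfl, fun C δ hne hC hconv hsubB hδ0 hδ1 => ?_⟩
    have hCD : C + closedBall (0:W) δ = C := by
      apply Subset.antisymm
      · intro z _
        obtain ⟨x₀, hx₀⟩ := hne
        exact (Subsingleton.elim z x₀) ▸ hx₀
      · intro a ha
        exact ⟨a, ha, 0, mem_closedBall_self hδ0, add_zero a⟩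
    rw [hCD, mul_zero, add_zero]
  have hnt : Nontrivial W := not_subsingleton_iff_nontrivial.mp hsub
  obtain ⟨K₁, hK₁0, hK₁⟩ := exists_K (W := W) ((n:ℝ) + 1) (by positivity)
  obtain ⟨K₀, hK₀0, hK₀⟩ := exists_K (W := W) (n:ℝ) (by exact_mod_cast hn)
  set m := finrank ℝ W with hmdef
  refine ⟨3*K₁ + 2^(m+1)*K₀, by positivity, fun C δ hne hC hconv hsubB hδ0 hδ1 => ?_⟩
  rcases eq_or_lt_of_le hδ0 with hδeq | hδpos
  · have hCD : C + closedBall (0:W) δ = C := by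
      rw [← hδeq, closedBall_zero, Set.add_singleton]
      simp
    rw [hCD, ← hδeq, zero_mul, add_zero]
  have hCclosed := hC.isClosed
  obtain ⟨x₀, hx₀⟩ := hne
  set A := {r : ℝ | 0 ≤ r ∧ ∃ x : W, closedBall x r ⊆ C} with hA
  have hA0 : (0:ℝ) ∈ A := ⟨le_rfl, x₀, by rw [closedBall_zero]; exact singleton_subset_iff.2 hx₀⟩
  have hAbdd : ∀ r ∈ A, r ≤ 2*(n:ℝ) := by
    rintro r ⟨hr0, x, hx⟩
    obtain ⟨e, he⟩ := exists_ne (0:W)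
    have hene : ‖e‖ ≠ 0 := norm_ne_zero_iff.2 he
    have h3 : ‖(r/‖e‖) • e‖ = r := by
      rw [norm_smul, Real.norm_eq_abs, abs_of_nonneg (div_nonneg hr0 (norm_nonneg e))]
      field_simp
    have hxC : x ∈ C := hx (mem_closedBall_self hr0)
    have hpC : x + (r / ‖e‖) • e ∈ C := by
      apply hx
      rw [mem_closedBall_iff_norm, add_sub_cancel_left, h3]
    have h1 : ‖x‖ ≤ (n:ℝ) := mem_closedBall_zero_iff.1 (hsubB hxC)
    have h2 : ‖x + (r/‖e‖) • e‖ ≤ (n:ℝ) := mem_closedBall_zero_iff.1 (hsubB hpC)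
    calc r = ‖(x + (r/‖e‖) • e) - x‖ := by rw [add_sub_cancel_left, h3]
      _ ≤ ‖x + (r/‖e‖) • e‖ + ‖x‖ := norm_sub_le _ _
      _ ≤ 2*(n:ℝ) := by linarith
  have hAbdd' : BddAbove A := ⟨2*(n:ℝ), fun r hr => hAbdd r hr⟩
  set rbar := sSup A with hrbar
  by_cases hcase : rbar ≤ δ
  -- thin case
  · have hno2δ : ∀ x : W, ¬ closedBall x (2*δ) ⊆ C := by
      intro x hx
      have h1 : 2*δ ∈ A := ⟨by linarith, x, hx⟩
      have h2 := le_csSup hAbdd' h1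
      rw [← hrbar] at h2
      linarith
    have hno3δ : ∀ x : W, ¬ closedBall x (3*δ) ⊆ (C + closedBall (0:W) δ) := by
      intro x hx
      apply hno2δ x
      have h1 : (2:ℝ)*δ = 3*δ - δ := by ring
      rw [h1]
      exact erosion hCclosed hconv ⟨x₀, hx₀⟩ hδ0 hx
    have hDcompact : IsCompact (C + closedBall (0:W) δ) := hC.add (isCompact_closedBall 0 δ)
    have hDconv : Convex ℝ (C + closedBall (0:W) δ) := hconv.add (convex_closedBall 0 δ)
    have hDsub : C + closedBall (0:W) δ ⊆ closedBall 0 ((n:ℝ)+1) := by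
      intro z hz
      obtain ⟨a, ha, e, he, hae⟩ := Set.mem_add.1 hz
      rw [mem_closedBall_zero_iff, ← hae]
      have h1 : ‖a‖ ≤ (n:ℝ) := mem_closedBall_zero_iff.1 (hsubB ha)
      have h2 : ‖e‖ ≤ δ := mem_closedBall_zero_iff.1 he
      calc ‖a + e‖ ≤ ‖a‖ + ‖e‖ := norm_add_le _ _
        _ ≤ (n:ℝ) + 1 := by linarith
    have hbound := hK₁ (C + closedBall (0:W) δ) (3*δ) (by linarith) hDcompact hDconv hDsub hno3δ
    have hμC0 : 0 ≤ (μH[(finrank ℝ W : ℝ)] C).toReal := ENNReal.toReal_nonneg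
    have hposr : 0 ≤ δ * (2^(m+1)*K₀) := by positivity
    calc (μH[(finrank ℝ W : ℝ)] (C + closedBall (0:W) δ)).toReal ≤ K₁ * (3*δ) := hbound
      _ ≤ (μH[(finrank ℝ W : ℝ)] C).toReal + δ * (3*K₁ + 2^(m+1)*K₀) := by nlinarith
  -- fat case
  · push_neg at hcase
    have hmax_lt : max δ (rbar/2) < rbar := by
      apply max_lt hcase
      linarith
    obtain ⟨r₀, hr₀A, hr₀gt⟩ := exists_lt_of_lt_csSup ⟨0, hA0⟩ (by rw [← hrbar]; exact hmax_lt)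
    obtain ⟨hr₀0, x₁, hball₁⟩ := hr₀A
    have hδr₀ : δ < r₀ := lt_of_le_of_lt (le_max_left _ _) hr₀gt
    have hr₀pos : 0 < r₀ := lt_of_le_of_lt hδ0 hδr₀
    have hno2r₀ : ∀ x : W, ¬ closedBall x (2*r₀) ⊆ C := by
      intro x hx
      have h1 : 2*r₀ ∈ A := ⟨by linarith, x, hx⟩
      have h2 := le_csSup hAbdd' h1
      rw [← hrbar] at h2
      have h3 : rbar/2 < r₀ := lt_of_le_of_lt (le_max_right _ _) hr₀gt
      linarith
    have hμCbound := hK₀ C (2*r₀) (by linarith) hC hconv hsubB hno2r₀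
    have hsubD := homothety_subset hconv hr₀pos hδ0 hball₁
    have hmeas := meas_homothety (W := W) x₁ (1 + δ/r₀) C
    have hfin : μH[(finrank ℝ W : ℝ)] ((fun y => x₁ + (1 + δ/r₀) • (y - x₁)) '' C) ≠ ⊤ := by
      rw [hmeas]
      exact ENNReal.mul_ne_top ENNReal.ofReal_ne_top hC.measure_lt_top.ne
    have hsnn : (0:ℝ) ≤ 1 + δ/r₀ := by positivity
    have hDle : (μH[(finrank ℝ W : ℝ)] (C + closedBall (0:W) δ)).toReal
        ≤ (1 + δ/r₀)^m * (μH[(finrank ℝ W : ℝ)] C).toReal := by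
      calc (μH[(finrank ℝ W : ℝ)] (C + closedBall (0:W) δ)).toReal
          ≤ (μH[(finrank ℝ W : ℝ)] ((fun y => x₁ + (1 + δ/r₀) • (y - x₁)) '' C)).toReal :=
            ENNReal.toReal_mono hfin (measure_mono hsubD)
        _ = |(1 + δ/r₀)^m| * (μH[(finrank ℝ W : ℝ)] C).toReal := by
            rw [hmeas, ENNReal.toReal_mul, ENNReal.toReal_ofReal (abs_nonneg _), hmdef]
        _ = (1 + δ/r₀)^m * (μH[(finrank ℝ W : ℝ)] C).toReal := by
            rw [abs_of_nonneg (pow_nonneg hsnn m)]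
    have hq : (1 + δ/r₀)^m ≤ 1 + ((2:ℝ)^m - 1)*(δ/r₀) :=
      one_add_pow_le m (by positivity) (by rw [div_le_one hr₀pos]; exact hδr₀.le)
    have hμC0 : 0 ≤ (μH[(finrank ℝ W : ℝ)] C).toReal := ENNReal.toReal_nonneg
    have key : ((2:ℝ)^m - 1)*(δ/r₀)*(μH[(finrank ℝ W : ℝ)] C).toReal ≤ 2^(m+1)*K₀*δ := by
      have h2 : (0:ℝ) ≤ (2:ℝ)^m - 1 := by
        have : (1:ℝ) ≤ 2^m := one_le_pow₀ (by norm_num)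
        linarith
      have h3 : (0:ℝ) ≤ δ/r₀ := by positivity
      calc ((2:ℝ)^m - 1)*(δ/r₀)*(μH[(finrank ℝ W : ℝ)] C).toReal
          ≤ ((2:ℝ)^m - 1)*(δ/r₀)*(K₀*(2*r₀)) := by
            exact mul_le_mul_of_nonneg_left hμCbound (by positivity)
        _ = ((2:ℝ)^m - 1)*2*K₀*δ := by field_simp
        _ ≤ 2^(m+1)*K₀*δ := by
            have h4 : (0:ℝ) ≤ K₀*δ := by positivity
            have h5 : ((2:ℝ)^m - 1)*2 ≤ 2^(m+1) := by rw [pow_succ]; linarith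
            nlinarith
    have h5 : (0:ℝ) ≤ δ*(3*K₁) := by positivity
    calc (μH[(finrank ℝ W : ℝ)] (C + closedBall (0:W) δ)).toReal
        ≤ (1 + δ/r₀)^m * (μH[(finrank ℝ W : ℝ)] C).toReal := hDle
      _ ≤ (1 + ((2:ℝ)^m - 1)*(δ/r₀)) * (μH[(finrank ℝ W : ℝ)] C).toReal :=
          mul_le_mul_of_nonneg_right hq hμC0
      _ = (μH[(finrank ℝ W : ℝ)] C).toReal
          + ((2:ℝ)^m - 1)*(δ/r₀)*(μH[(finrank ℝ W : ℝ)] C).toReal := by ring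
      _ ≤ (μH[(finrank ℝ W : ℝ)] C).toReal + 2^(m+1)*K₀*δ := by linarith
      _ ≤ (μH[(finrank ℝ W : ℝ)] C).toReal + δ * (3*K₁ + 2^(m+1)*K₀) := by nlinarith


end Stmt15Aux

/-- Steiner-type estimate: on an `m`-dimensional Euclidean space, there is a constant
`c(m,n)` such that any two nonempty compact convex subsets of the ball of radius `n`
at Hausdorff distance `δ ≤ 1` have `𝓗ᵐ` measures differing by at most `δ · c(m,n)`. -/
theorem stmt15 {W : Type*} [NormedAddCommGroup W] [InnerProductSpace ℝ W]
    [FiniteDimensional ℝ W] [MeasurableSpace W] [BorelSpace W]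
    (n : ℕ) (hn : 0 < n) :
    ∃ c : ℝ, ∀ C C' : Set W,
      C.Nonempty → C'.Nonempty → IsCompact C → IsCompact C' →
      Convex ℝ C → Convex ℝ C' →
      C ⊆ Metric.closedBall 0 n → C' ⊆ Metric.closedBall 0 n →
      Metric.hausdorffDist C C' ≤ 1 →
      |(μH[(Module.finrank ℝ W : ℝ)] C).toReal - (μH[(Module.finrank ℝ W : ℝ)] C').toReal|
        ≤ Metric.hausdorffDist C C' * c := by
  obtain ⟨c₂, hc₂0, hc₂⟩ := exists_c2 (W := W) n hn
  refine ⟨c₂, fun C C' hne hne' hC hC' hconv hconv' hsub hsub' hd1 => ?_⟩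
  have hδ0 : 0 ≤ hausdorffDist C C' := hausdorffDist_nonneg
  have hedist : EMetric.hausdorffEdist C C' ≠ ⊤ :=
    hausdorffEdist_ne_top_of_nonempty_of_bounded hne hne' hC.isBounded hC'.isBounded
  have hsubCD : C' ⊆ C + closedBall (0:W) (hausdorffDist C C') := by
    intro x hx
    have h1 : infDist x C ≤ hausdorffDist C C' := by
      rw [hausdorffDist_comm]
      exact infDist_le_hausdorffDist_of_mem hx (by rwa [EMetric.hausdorffEdist_comm])
    obtain ⟨y, hy, hyd⟩ := hC.exists_infDist_eq_dist hne x
    refine ⟨y, hy, x - y, ?_, show y + (x - y) = x from add_sub_cancel y x⟩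
    rw [mem_closedBall_zero_iff, ← dist_eq_norm, ← hyd]
    exact h1
  have hsubC'D : C ⊆ C' + closedBall (0:W) (hausdorffDist C C') := by
    intro x hx
    have h1 : infDist x C' ≤ hausdorffDist C C' :=
      infDist_le_hausdorffDist_of_mem hx hedist
    obtain ⟨y, hy, hyd⟩ := hC'.exists_infDist_eq_dist hne' x
    refine ⟨y, hy, x - y, ?_, show y + (x - y) = x from add_sub_cancel y x⟩
    rw [mem_closedBall_zero_iff, ← dist_eq_norm, ← hyd]
    exact h1
  have hside1 : (μH[(Module.finrank ℝ W : ℝ)] C').toReal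
      ≤ (μH[(Module.finrank ℝ W : ℝ)] C).toReal + hausdorffDist C C' * c₂ := by
    have hfinD : μH[(Module.finrank ℝ W : ℝ)] (C + closedBall (0:W) (hausdorffDist C C')) ≠ ⊤ :=
      ((hC.add (isCompact_closedBall _ _)).measure_lt_top).ne
    exact le_trans (ENNReal.toReal_mono hfinD (measure_mono hsubCD))
      (hc₂ C (hausdorffDist C C') hne hC hconv hsub hδ0 hd1)
  have hside2 : (μH[(Module.finrank ℝ W : ℝ)] C).toReal
      ≤ (μH[(Module.finrank ℝ W : ℝ)] C').toReal + hausdorffDist C C' * c₂ := by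
    have hfinD : μH[(Module.finrank ℝ W : ℝ)] (C' + closedBall (0:W) (hausdorffDist C C')) ≠ ⊤ :=
      ((hC'.add (isCompact_closedBall _ _)).measure_lt_top).ne
    exact le_trans (ENNReal.toReal_mono hfinD (measure_mono hsubC'D))
      (hc₂ C' (hausdorffDist C C') hne' hC' hconv' hsub' hδ0 hd1)
  rw [abs_sub_le_iff]
  constructor <;> linarith
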